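/- Let k be a field and R a commutative graded k-algebra with grading 𝒜 : ℕ → Submodule k R, 𝒜 0 = k·1, which is a Hilbert–Serre ring with Hilbert–Serre dimension d(R). Let h ≥ 1 and let x ∈ 𝒜 h be a non-zero-divisor of R (hence a non-unit). For each n let B n be the image of 𝒜 n under the quotient map R → R/(x). Then R/(x), graded by the B n, is a Hilbert–Serre ring and its Hilbert–Serre dimension equals d(R) − 1. -/

import Mathlib

/-- The boundedness condition defining Hilbert–Serre rings: for all `t ∈ (0,1)` the
Poincaré series `∑ F n * tⁿ` converges and `(1 - t) ^ d` times its sum is bounded by a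
uniform constant `C > 0`. -/
def HSBound (F : ℕ → ℕ) (d : ℕ) : Prop :=
  ∃ C : ℝ, 0 < C ∧ ∀ t : ℝ, t ∈ Set.Ioo (0 : ℝ) 1 →
    Summable (fun n => (F n : ℝ) * t ^ n) ∧
      (1 - t) ^ d * (∑' n, (F n : ℝ) * t ^ n) ≤ C

/-- A graded algebra with grading `𝒜` is a *Hilbert–Serre ring* if every graded component
is finite dimensional over `k` and the Poincaré series `∑ dim_k (𝒜 n) tⁿ` satisfies the
boundedness condition `HSBound` for some `d`. -/
def IsHilbertSerre {k R : Type*} [Field k] [CommRing R] [Algebra k R]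
    (𝒜 : ℕ → Submodule k R) : Prop :=
  (∀ n, FiniteDimensional k (𝒜 n)) ∧
    ∃ d, HSBound (fun n => Module.finrank k (𝒜 n)) d

/-- The Hilbert–Serre dimension `d(R)`: the least `d` such that `(1-t)^d P_R(t)` is
bounded on `(0,1)`. -/
noncomputable def hsDim {k R : Type*} [Field k] [CommRing R] [Algebra k R]
    (𝒜 : ℕ → Submodule k R) : ℕ :=
  sInf {d | HSBound (fun n => Module.finrank k (𝒜 n)) d}

/- ### Auxiliary analytic lemmas -/

private lemma geom_aux {t : ℝ} (ht0 : 0 ≤ t) (ht1 : t ≤ 1) (h : ℕ) :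
    1 - t ^ h ≤ (h : ℝ) * (1 - t) := by
  induction h with
  | zero => simp
  | succ m ih =>
    have hpow : 0 ≤ 1 - t ^ m := by
      have := pow_le_one₀ ht0 ht1 (n := m); linarith
    have hstep : 1 - t ^ (m + 1) = (1 - t) + t * (1 - t ^ m) := by ring
    push_cast
    nlinarith [mul_le_of_le_one_left hpow ht1]

private lemma finset_shift (F : ℕ → ℕ) (t : ℝ) (h N : ℕ) :
    ∑ n ∈ Finset.range N, (if h ≤ n then (F (n - h) : ℝ) else 0) * t ^ n
      = t ^ h * ∑ m ∈ Finset.range (N - h), (F m : ℝ) * t ^ m := by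
  rcases le_or_gt N h with hN | hN
  · rw [Nat.sub_eq_zero_of_le hN]
    simp only [Finset.range_zero, Finset.sum_empty, mul_zero]
    apply Finset.sum_eq_zero
    intro n hn
    rw [if_neg (by simp at hn; omega), zero_mul]
  · have hhN : h ≤ N := hN.le
    have h1 : ∑ n ∈ Finset.Ico 0 h, (if h ≤ n then (F (n - h) : ℝ) else 0) * t ^ n = 0 := by
      apply Finset.sum_eq_zero
      intro n hn
      simp only [Finset.mem_Ico] at hn
      rw [if_neg (by omega), zero_mul]
    calc ∑ n ∈ Finset.range N, (if h ≤ n then (F (n - h) : ℝ) else 0) * t ^ n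
        = ∑ n ∈ Finset.Ico h N, (if h ≤ n then (F (n - h) : ℝ) else 0) * t ^ n := by
          rw [Finset.range_eq_Ico, ← Finset.sum_Ico_consecutive _ (Nat.zero_le h) hhN, h1,
            zero_add]
      _ = ∑ m ∈ Finset.range (N - h), (if h ≤ h + m then (F (h + m - h) : ℝ) else 0)
            * t ^ (h + m) := Finset.sum_Ico_eq_sum_range _ h N
      _ = t ^ h * ∑ m ∈ Finset.range (N - h), (F m : ℝ) * t ^ m := by
          rw [Finset.mul_sum]
          apply Finset.sum_congr rfl
          intro m _
          rw [if_pos (by omega)]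
          have : h + m - h = m := by omega
          rw [this]
          ring

private lemma shift_support {F : ℕ → ℕ} {t : ℝ} {h : ℕ} :
    Function.support (fun n : ℕ => (if h ≤ n then (F (n - h) : ℝ) else 0) * t ^ n)
      ⊆ Set.range (fun m : ℕ => m + h) := by
  intro n hn
  simp only [Function.mem_support] at hn
  rcases le_or_gt h n with hc | hc
  · exact ⟨n - h, show n - h + h = n by omega⟩
  · exfalso
    apply hn
    rw [if_neg (by omega), zero_mul]

private lemma shift_inj {h : ℕ} : Function.Injective (fun m : ℕ => m + h) :=
  add_left_injective h

private lemma summable_shift {F : ℕ → ℕ} {t : ℝ} (h : ℕ)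
    (hsum : Summable (fun n => (F n : ℝ) * t ^ n)) :
    Summable (fun n : ℕ => (if h ≤ n then (F (n - h) : ℝ) else 0) * t ^ n) := by
  rw [← Function.Injective.summable_iff shift_inj
    (fun x hx => by_contra fun hne => hx (shift_support (by simpa using hne)))]
  have : ((fun n : ℕ => (if h ≤ n then (F (n - h) : ℝ) else 0) * t ^ n) ∘ fun m : ℕ => m + h)
      = fun m : ℕ => t ^ h * ((F m : ℝ) * t ^ m) := by
    funext m
    simp only [Function.comp_apply]
    rw [if_pos (by omega)]
    have : m + h - h = m := by omega
    rw [this]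
    ring
  rw [this]
  exact hsum.mul_left _

private lemma tsum_shift {F : ℕ → ℕ} {t : ℝ} (h : ℕ)
    (hsum : Summable (fun n => (F n : ℝ) * t ^ n)) :
    ∑' n : ℕ, (if h ≤ n then (F (n - h) : ℝ) else 0) * t ^ n
      = t ^ h * ∑' n : ℕ, (F n : ℝ) * t ^ n := by
  rw [← Function.Injective.tsum_eq shift_inj shift_support]
  have : ∀ m : ℕ, (if h ≤ m + h then (F (m + h - h) : ℝ) else 0) * t ^ (m + h)
      = t ^ h * ((F m : ℝ) * t ^ m) := by
    intro m
    rw [if_pos (by omega)]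
    have : m + h - h = m := by omega
    rw [this]
    ring
  rw [tsum_congr this, tsum_mul_left]

private lemma key_cast {F G : ℕ → ℕ} {h : ℕ}
    (key : ∀ n, G n + (if h ≤ n then F (n - h) else 0) = F n) (t : ℝ) :
    (fun n => (G n : ℝ) * t ^ n)
      = fun n => (F n : ℝ) * t ^ n - (if h ≤ n then (F (n - h) : ℝ) else 0) * t ^ n := by
  funext n
  have := key n
  split_ifs with hc
  · rw [if_pos hc] at this
    have : (G n : ℝ) = (F n : ℝ) - (F (n - h) : ℝ) := by
      rw [← this]; push_cast; ring
    rw [this]; ring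
  · rw [if_neg hc] at this
    simp only [add_zero] at this
    rw [this]; ring

private lemma tsum_GF {F G : ℕ → ℕ} {h : ℕ}
    (key : ∀ n, G n + (if h ≤ n then F (n - h) else 0) = F n)
    {t : ℝ} (hsumF : Summable (fun n => (F n : ℝ) * t ^ n)) :
    Summable (fun n => (G n : ℝ) * t ^ n) ∧
      ∑' n, (G n : ℝ) * t ^ n = (1 - t ^ h) * ∑' n, (F n : ℝ) * t ^ n := by
  have hsh := summable_shift h hsumF
  have hfun := key_cast key t
  constructor
  · rw [hfun]; exact hsumF.sub hsh
  · rw [hfun, Summable.tsum_sub hsumF hsh, tsum_shift h hsumF]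
    ring

private lemma hsb_down {F G : ℕ → ℕ} {h : ℕ} (hh : 1 ≤ h)
    (key : ∀ n, G n + (if h ≤ n then F (n - h) else 0) = F n)
    {d : ℕ} (hF : HSBound F d) : HSBound G (d - 1) := by
  obtain ⟨C, hC, hbd⟩ := hF
  refine ⟨h * C, by positivity, fun t ht => ?_⟩
  obtain ⟨hsumF, hbdF⟩ := hbd t ht
  obtain ⟨ht0, ht1⟩ := ht
  obtain ⟨hsumG, hEq⟩ := tsum_GF key hsumF
  refine ⟨hsumG, ?_⟩
  rw [hEq]
  have hFnn : 0 ≤ ∑' n, (F n : ℝ) * t ^ n :=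
    tsum_nonneg fun n => by positivity
  have h1t : (0:ℝ) ≤ 1 - t := by linarith
  have hgeom := geom_aux ht0.le ht1.le h
  have hcoef : (1 - t) ^ (d - 1) * (1 - t ^ h) ≤ (h : ℝ) * (1 - t) ^ d := by
    rcases Nat.eq_zero_or_pos d with hd | hd
    · subst hd
      simp only [Nat.zero_sub, pow_zero, one_mul]
      have : t ^ h ≥ 0 := by positivity
      have : (1:ℝ) ≤ h := by exact_mod_cast hh
      nlinarith
    · obtain ⟨e, rfl⟩ : ∃ e, d = e + 1 := ⟨d - 1, by omega⟩
      have hsub : e + 1 - 1 = e := by omega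
      rw [hsub, pow_succ]
      have hp : (0:ℝ) ≤ (1 - t) ^ e := by positivity
      calc (1 - t) ^ e * (1 - t ^ h) ≤ (1 - t) ^ e * ((h : ℝ) * (1 - t)) :=
            mul_le_mul_of_nonneg_left hgeom hp
        _ = (h : ℝ) * ((1 - t) ^ e * (1 - t)) := by ring
  calc (1 - t) ^ (d - 1) * ((1 - t ^ h) * ∑' n, (F n : ℝ) * t ^ n)
      = ((1 - t) ^ (d - 1) * (1 - t ^ h)) * ∑' n, (F n : ℝ) * t ^ n := by ring
    _ ≤ ((h : ℝ) * (1 - t) ^ d) * ∑' n, (F n : ℝ) * t ^ n :=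
        mul_le_mul_of_nonneg_right hcoef hFnn
    _ = (h : ℝ) * ((1 - t) ^ d * ∑' n, (F n : ℝ) * t ^ n) := by ring
    _ ≤ (h : ℝ) * C := by
        apply mul_le_mul_of_nonneg_left hbdF
        positivity

private lemma hsb_up {F G : ℕ → ℕ} {h : ℕ} (hh : 1 ≤ h)
    (key : ∀ n, G n + (if h ≤ n then F (n - h) else 0) = F n)
    {d : ℕ} (hG : HSBound G d) : HSBound F (d + 1) := by
  obtain ⟨C, hC, hbd⟩ := hG
  refine ⟨C, hC, fun t ht => ?_⟩
  obtain ⟨hsumG, hbdG⟩ := hbd t ht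
  obtain ⟨ht0, ht1⟩ := ht
  have hth : t ^ h < 1 := pow_lt_one₀ ht0.le ht1 (by omega)
  have hth0 : (0:ℝ) < 1 - t ^ h := by linarith
  have hSGnn : 0 ≤ ∑' n, (G n : ℝ) * t ^ n :=
    tsum_nonneg fun n => by positivity
  -- partial sums of F are bounded
  have hpart : ∀ N, ∑ n ∈ Finset.range N, (F n : ℝ) * t ^ n
      ≤ (∑' n, (G n : ℝ) * t ^ n) / (1 - t ^ h) := by
    intro N
    have h1 : ∑ n ∈ Finset.range N, (F n : ℝ) * t ^ n
        = ∑ n ∈ Finset.range N, (G n : ℝ) * t ^ n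
          + ∑ n ∈ Finset.range N, (if h ≤ n then (F (n - h) : ℝ) else 0) * t ^ n := by
      rw [← Finset.sum_add_distrib]
      apply Finset.sum_congr rfl
      intro n _
      have := congrFun (key_cast key t) n
      rw [this]; ring
    have h2 := finset_shift F t h N
    have h3 : ∑ m ∈ Finset.range (N - h), (F m : ℝ) * t ^ m
        ≤ ∑ n ∈ Finset.range N, (F n : ℝ) * t ^ n := by
      apply Finset.sum_le_sum_of_subset_of_nonneg
      · exact Finset.range_subset_range.mpr (by omega)
      · intro i _ _; positivity
    have h4 : ∑ n ∈ Finset.range N, (G n : ℝ) * t ^ n ≤ ∑' n, (G n : ℝ) * t ^ n :=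
      Summable.sum_le_tsum _ (fun i _ => by positivity) hsumG
    rw [le_div_iff₀ hth0]
    have hthnn : (0:ℝ) ≤ t ^ h := by positivity
    nlinarith
  have hsumF : Summable (fun n => (F n : ℝ) * t ^ n) :=
    summable_of_sum_range_le (fun n => by positivity) hpart
  refine ⟨hsumF, ?_⟩
  obtain ⟨_, hEq⟩ := tsum_GF key hsumF
  have hFnn : 0 ≤ ∑' n, (F n : ℝ) * t ^ n :=
    tsum_nonneg fun n => by positivity
  have hpnn : (0:ℝ) ≤ (1 - t) ^ d := by
    have : (0:ℝ) ≤ 1 - t := by linarith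
    positivity
  have hts : t ^ h ≤ t := by
    calc t ^ h ≤ t ^ 1 := pow_le_pow_of_le_one ht0.le ht1.le hh
      _ = t := pow_one t
  calc (1 - t) ^ (d + 1) * ∑' n, (F n : ℝ) * t ^ n
      = (1 - t) ^ d * ((1 - t) * ∑' n, (F n : ℝ) * t ^ n) := by ring
    _ ≤ (1 - t) ^ d * ((1 - t ^ h) * ∑' n, (F n : ℝ) * t ^ n) := by
        apply mul_le_mul_of_nonneg_left _ hpnn
        apply mul_le_mul_of_nonneg_right _ hFnn
        linarith
    _ = (1 - t) ^ d * ∑' n, (G n : ℝ) * t ^ n := by rw [hEq]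
    _ ≤ C := hbdG

/- ### The algebraic key : dimension count in each degree -/

private lemma finrank_quot_key {k R : Type*} [Field k] [CommRing R] [Algebra k R]
    (𝒜 : ℕ → Submodule k R) [GradedAlgebra 𝒜]
    (hfin : ∀ n, FiniteDimensional k (𝒜 n))
    (h : ℕ) (x : R) (hx : x ∈ 𝒜 h)
    (hreg : ∀ y : R, x * y = 0 → y = 0)
    (B : ℕ → Submodule k (R ⧸ Ideal.span {x}))
    (hB : ∀ n, B n = (𝒜 n).map (Ideal.Quotient.mkₐ k (Ideal.span {x})).toLinearMap)
    (n : ℕ) :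
    Module.finrank k (B n) + (if h ≤ n then Module.finrank k (𝒜 (n - h)) else 0)
      = Module.finrank k (𝒜 n) := by
  classical
  haveI := hfin n
  -- every element of `(x) ∩ 𝒜 n` is `x * z` with `z ∈ 𝒜 (n - h)` (or zero if `n < h`)
  have hsurj : ∀ y : R, y ∈ Ideal.span {x} → y ∈ 𝒜 n →
      if h ≤ n then ∃ z, z ∈ 𝒜 (n - h) ∧ x * z = y else y = 0 := by
    intro y hyI hyn
    obtain ⟨a, ha⟩ := Ideal.mem_span_singleton'.mp hyI
    have hy : y = x * a := by rw [← ha]; ring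
    have hdec : (DirectSum.decompose 𝒜 y n : R) = y :=
      DirectSum.decompose_of_mem_same 𝒜 hyn
    split_ifs with hc
    · refine ⟨(DirectSum.decompose 𝒜 a (n - h) : R), SetLike.coe_mem _, ?_⟩
      have hmul : (DirectSum.decompose 𝒜 (x * a) n : R)
          = x * (DirectSum.decompose 𝒜 a (n - h) : R) :=
        DirectSum.coe_decompose_mul_of_left_mem_of_le 𝒜 hx hc
      rw [← hdec, hy, hmul]
    · rw [← hdec, hy, DirectSum.coe_decompose_mul_of_left_mem_of_not_le 𝒜 hx hc]
  -- dimension of `(x) ⊓ 𝒜 n`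
  have hinfrank : Module.finrank k
      ((Submodule.restrictScalars k (Ideal.span {x}) ⊓ 𝒜 n : Submodule k R))
      = if h ≤ n then Module.finrank k (𝒜 (n - h)) else 0 := by
    split_ifs with hc
    · haveI := hfin (n - h)
      have hadd : h + (n - h) = n := by omega
      let φ : (𝒜 (n - h)) →ₗ[k]
          ((Submodule.restrictScalars k (Ideal.span {x}) ⊓ 𝒜 n : Submodule k R)) :=
        { toFun := fun z => ⟨x * z,
            ⟨Ideal.mem_span_singleton'.mpr ⟨(z : R), mul_comm (z : R) x⟩, by
              have h2 := SetLike.mul_mem_graded hx z.2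
              rwa [hadd] at h2⟩⟩
          map_add' := fun a b => by
            apply Subtype.ext
            simp [mul_add]
          map_smul' := fun c a => by
            apply Subtype.ext
            simp [mul_smul_comm] }
      have hinj : Function.Injective φ := by
        intro a b hab
        have h1 : x * (a : R) = x * (b : R) := congrArg Subtype.val hab
        have h2 : x * ((a : R) - (b : R)) = 0 := by rw [mul_sub, h1, sub_self]
        have h3 : (a : R) - (b : R) = 0 := hreg _ h2
        exact Subtype.ext (sub_eq_zero.mp h3)
      have hsurjφ : Function.Surjective φ := by
        rintro ⟨y, hyI, hyn⟩
        have := hsurj y hyI hyn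
        rw [if_pos hc] at this
        obtain ⟨z, hz, hxz⟩ := this
        exact ⟨⟨z, hz⟩, Subtype.ext hxz⟩
      exact (LinearEquiv.ofBijective φ ⟨hinj, hsurjφ⟩).finrank_eq.symm
    · have hbot : (Submodule.restrictScalars k (Ideal.span {x}) ⊓ 𝒜 n : Submodule k R)
          = ⊥ := by
        rw [eq_bot_iff]
        rintro y ⟨hyI, hyn⟩
        have := hsurj y hyI hyn
        rw [if_neg hc] at this
        simpa using this
      rw [hbot]
      exact finrank_bot k R
  -- rank-nullity for the restriction of the quotient map to `𝒜 n`
  have hrn := LinearMap.finrank_range_add_finrank_ker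
    (((Ideal.Quotient.mkₐ k (Ideal.span {x})).toLinearMap).comp (𝒜 n).subtype)
  have hrange : LinearMap.range
      (((Ideal.Quotient.mkₐ k (Ideal.span {x})).toLinearMap).comp (𝒜 n).subtype) = B n := by
    rw [hB n, LinearMap.range_comp, Submodule.range_subtype]
  have hker : LinearMap.ker
      (((Ideal.Quotient.mkₐ k (Ideal.span {x})).toLinearMap).comp (𝒜 n).subtype)
      = Submodule.comap (𝒜 n).subtype
          (Submodule.restrictScalars k (Ideal.span {x}) ⊓ 𝒜 n) := by
    ext z
    simp only [LinearMap.mem_ker, LinearMap.comp_apply, Submodule.coe_subtype,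
      Submodule.mem_comap, Submodule.mem_inf, Submodule.restrictScalars_mem,
      AlgHom.toLinearMap_apply, Ideal.Quotient.mkₐ_eq_mk, Ideal.Quotient.eq_zero_iff_mem]
    exact ⟨fun hz => ⟨hz, z.2⟩, fun hz => hz.1⟩
  rw [hrange, hker] at hrn
  have hce : Module.finrank k (Submodule.comap (𝒜 n).subtype
        (Submodule.restrictScalars k (Ideal.span {x}) ⊓ 𝒜 n))
      = Module.finrank k
          ((Submodule.restrictScalars k (Ideal.span {x}) ⊓ 𝒜 n : Submodule k R)) :=
    (Submodule.comapSubtypeEquivOfLe inf_le_right).finrank_eq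
  rw [hce, hinfrank] at hrn
  exact hrn

/-- the quotient of a Hilbert–Serre ring by a homogeneous non-zero-divisor
`x` of degree `h ≥ 1` is again a Hilbert–Serre ring (for the grading by images of the
`𝒜 n`), and `d(R/(x)) = d(R) - 1`. -/
theorem quotient_regular_hilbertSerre {k R : Type*} [Field k] [CommRing R] [Algebra k R]
    (𝒜 : ℕ → Submodule k R) [GradedAlgebra 𝒜] (h0 : 𝒜 0 = 1)
    (hHS : IsHilbertSerre 𝒜)
    (h : ℕ) (hh : 1 ≤ h) (x : R) (hx : x ∈ 𝒜 h)
    (hreg : ∀ y : R, x * y = 0 → y = 0)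
    (B : ℕ → Submodule k (R ⧸ Ideal.span {x}))
    (hB : ∀ n, B n = (𝒜 n).map (Ideal.Quotient.mkₐ k (Ideal.span {x})).toLinearMap) :
    (∀ n, FiniteDimensional k (B n)) ∧
      (∃ d, HSBound (fun n => Module.finrank k (B n)) d) ∧
      sInf {d | HSBound (fun n => Module.finrank k (B n)) d} = hsDim 𝒜 - 1 := by
  obtain ⟨hfin, hexF⟩ := hHS
  have key : ∀ n, Module.finrank k (B n)
      + (if h ≤ n then Module.finrank k (𝒜 (n - h)) else 0) = Module.finrank k (𝒜 n) :=
    finrank_quot_key 𝒜 hfin h x hx hreg B hB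
  have hfinB : ∀ n, FiniteDimensional k (B n) := by
    intro n
    rw [hB n]
    haveI := hfin n
    infer_instance
  have hSFne : {d | HSBound (fun n => Module.finrank k (𝒜 n)) d}.Nonempty := hexF
  have hdR : HSBound (fun n => Module.finrank k (𝒜 n)) (hsDim 𝒜) := Nat.sInf_mem hSFne
  have hG1 : HSBound (fun n => Module.finrank k (B n)) (hsDim 𝒜 - 1) :=
    hsb_down (F := fun n => Module.finrank k (𝒜 n))
      (G := fun n => Module.finrank k (B n)) hh key hdR
  refine ⟨hfinB, ⟨_, hG1⟩, ?_⟩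
  apply le_antisymm
  · exact Nat.sInf_le hG1
  · have hSGne : {d | HSBound (fun n => Module.finrank k (B n)) d}.Nonempty := ⟨_, hG1⟩
    have he : HSBound (fun n => Module.finrank k (B n))
        (sInf {d | HSBound (fun n => Module.finrank k (B n)) d}) := Nat.sInf_mem hSGne
    have hup := hsb_up (F := fun n => Module.finrank k (𝒜 n))
      (G := fun n => Module.finrank k (B n)) hh key he
    have h2 : hsDim 𝒜 ≤ sInf {d | HSBound (fun n => Module.finrank k (B n)) d} + 1 :=
      Nat.sInf_le hup
    omega
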